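/- For every g > 0, ∫_{0}^{∞} ∫_{0}^{∞} σ^{−4} (1 + ξ g/σ)^{−3(1+1/ξ)} dσ dξ = (2/9) g^{−3} ln 2. -/

import Mathlib

open MeasureTheory Real Set Filter Topology

open scoped ENNReal

set_option maxHeartbeats 1000000 in
lemma gp_inner_lintegral (a p : ℝ) (ha : 0 < a) (hp : 3 < p) :
    ∫⁻ σ in Set.Ioi (0 : ℝ), ENNReal.ofReal (σ ^ (-(4 : ℝ)) * (1 + a / σ) ^ (-p))
      = ENNReal.ofReal (2 / (a ^ 3 * ((p - 1) * (p - 2) * (p - 3)))) := by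
  have h1 : p - 1 ≠ 0 := by linarith
  have h2 : p - 2 ≠ 0 := by linarith
  have h3 : p - 3 ≠ 0 := by linarith
  set F : ℝ → ℝ := fun σ =>
    ((σ / (σ + a)) ^ (p - 3) / (p - 3) - 2 * (σ / (σ + a)) ^ (p - 2) / (p - 2)
      + (σ / (σ + a)) ^ (p - 1) / (p - 1)) / a ^ 3 with hFdef
  set f : ℝ → ℝ := fun σ => σ ^ (p - 4) * (σ + a) ^ (-p) with hfdef
  have hderiv : ∀ σ ∈ Set.Ioi (0 : ℝ), HasDerivAt F (f σ) σ := by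
    intro σ hσ
    have hσ0 : (0 : ℝ) < σ := hσ
    have hb : (0 : ℝ) < σ + a := by linarith
    have hw : (0 : ℝ) < σ / (σ + a) := div_pos hσ0 hb
    have hwd : HasDerivAt (fun σ : ℝ => σ / (σ + a)) (a / (σ + a) ^ 2) σ := by
      have h := (hasDerivAt_id σ).div ((hasDerivAt_id σ).add_const a) hb.ne'
      refine h.congr_deriv (Eq.symm ?_)
      simp only [id]
      ring
    have d1 := (hwd.rpow_const (p := p - 3) (Or.inl hw.ne')).div_const (p - 3)
    have d2 := ((hwd.rpow_const (p := p - 2) (Or.inl hw.ne')).const_mul 2).div_const (p - 2)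
    have d3 := (hwd.rpow_const (p := p - 1) (Or.inl hw.ne')).div_const (p - 1)
    have hD := ((d1.sub d2).add d3).div_const (a ^ 3)
    refine hD.congr_deriv (Eq.symm ?_)
    rw [show p - 3 - 1 = p - 4 from by ring, show p - 2 - 1 = p - 3 from by ring,
      show p - 1 - 1 = p - 2 from by ring]
    have e4 : (σ / (σ + a)) ^ (p - 4) = σ ^ (p - 4) / (σ + a) ^ (p - 4) :=
      Real.div_rpow hσ0.le hb.le _
    have e3 : (σ / (σ + a)) ^ (p - 3) = σ ^ (p - 4) * σ / ((σ + a) ^ (p - 4) * (σ + a)) := by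
      rw [Real.div_rpow hσ0.le hb.le, show p - 3 = (p - 4) + 1 from by ring,
        Real.rpow_add hσ0, Real.rpow_add hb, Real.rpow_one, Real.rpow_one]
    have e2 : (σ / (σ + a)) ^ (p - 2)
        = σ ^ (p - 4) * σ * σ / ((σ + a) ^ (p - 4) * (σ + a) * (σ + a)) := by
      rw [Real.div_rpow hσ0.le hb.le, show p - 2 = (p - 4) + 1 + 1 from by ring,
        Real.rpow_add hσ0, Real.rpow_add hσ0, Real.rpow_add hb, Real.rpow_add hb,
        Real.rpow_one, Real.rpow_one]
    have eP : (σ + a) ^ (-p) = ((σ + a) ^ (p - 4) * (σ + a) ^ (4 : ℕ))⁻¹ := by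
      rw [Real.rpow_neg hb.le, show p = (p - 4) + 4 from by ring, Real.rpow_add hb]
      rw [add_sub_cancel_right, ← Real.rpow_natCast (σ + a) 4]
      norm_num
    have hS : (0 : ℝ) < σ ^ (p - 4) := Real.rpow_pos_of_pos hσ0 _
    have hB : (0 : ℝ) < (σ + a) ^ (p - 4) := Real.rpow_pos_of_pos hb _
    rw [hfdef]
    simp only
    rw [e4, e3, e2, eP]
    field_simp
    ring
  have hpos : ∀ σ ∈ Set.Ioi (0 : ℝ), 0 ≤ f σ := by
    intro σ hσ
    have hσ0 : (0 : ℝ) < σ := hσ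
    have hb : (0 : ℝ) < σ + a := by linarith
    exact mul_nonneg (Real.rpow_nonneg hσ0.le _) (Real.rpow_nonneg hb.le _)
  have hwtop : Tendsto (fun σ : ℝ => σ / (σ + a)) atTop (𝓝 1) := by
    have h0 : Tendsto (fun σ : ℝ => a / (σ + a)) atTop (𝓝 0) :=
      Tendsto.div_atTop tendsto_const_nhds (tendsto_atTop_add_const_right _ a tendsto_id)
    have h1' : Tendsto (fun σ : ℝ => 1 - a / (σ + a)) atTop (𝓝 (1 - 0)) :=
      tendsto_const_nhds.sub h0
    rw [sub_zero] at h1'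
    refine Tendsto.congr' ?_ h1'
    filter_upwards [eventually_gt_atTop (0 : ℝ)] with σ hσ
    have hb : σ + a ≠ 0 := by positivity
    field_simp
    ring
  have hFtop : Tendsto F atTop (𝓝 ((1 / (p - 3) - 2 / (p - 2) + 1 / (p - 1)) / a ^ 3)) := by
    have t1 := (hwtop.rpow_const (p := p - 3) (Or.inl one_ne_zero)).div_const (p - 3)
    have t2 := ((hwtop.rpow_const (p := p - 2) (Or.inl one_ne_zero)).const_mul 2).div_const (p - 2)
    have t3 := (hwtop.rpow_const (p := p - 1) (Or.inl one_ne_zero)).div_const (p - 1)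
    have h := ((t1.sub t2).add t3).div_const (a ^ 3)
    rw [Real.one_rpow] at h
    simpa using h
  have hcont : ContinuousWithinAt F (Set.Ici (0 : ℝ)) 0 := by
    apply ContinuousAt.continuousWithinAt
    have hwc : ContinuousAt (fun σ : ℝ => σ / (σ + a)) 0 := by
      refine continuousAt_id.div (continuousAt_id.add continuousAt_const) ?_
      simpa using ha.ne'
    exact ((((hwc.rpow_const (p := p - 3) (Or.inr (by linarith))).div_const _).sub
      (((hwc.rpow_const (p := p - 2) (Or.inr (by linarith))).const_mul 2).div_const _)).add
      ((hwc.rpow_const (p := p - 1) (Or.inr (by linarith))).div_const _)).div_const _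
  have key : ∫ σ in Set.Ioi (0 : ℝ), f σ
      = (1 / (p - 3) - 2 / (p - 2) + 1 / (p - 1)) / a ^ 3 - F 0 :=
    integral_Ioi_of_hasDerivAt_of_nonneg hcont hderiv hpos hFtop
  have hIntf : IntegrableOn f (Set.Ioi (0 : ℝ)) :=
    integrableOn_Ioi_deriv_of_nonneg hcont hderiv hpos hFtop
  have hF0 : F 0 = 0 := by
    simp [hFdef, Real.zero_rpow h1, Real.zero_rpow h2, Real.zero_rpow h3]
  have hEq : ∀ σ ∈ Set.Ioi (0 : ℝ), σ ^ (-(4 : ℝ)) * (1 + a / σ) ^ (-p) = f σ := by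
    intro σ hσ
    have hσ0 : (0 : ℝ) < σ := hσ
    have hb : (0 : ℝ) < σ + a := by linarith
    have h1a : (1 : ℝ) + a / σ = (σ + a) / σ := by field_simp
    rw [h1a, Real.div_rpow hb.le hσ0.le, div_eq_mul_inv, ← Real.rpow_neg hσ0.le, neg_neg,
      hfdef]
    simp only
    rw [show p - 4 = -(4 : ℝ) + p from by ring, Real.rpow_add hσ0]
    ring
  have hInt : IntegrableOn (fun σ : ℝ => σ ^ (-(4 : ℝ)) * (1 + a / σ) ^ (-p))
      (Set.Ioi (0 : ℝ)) :=
    hIntf.congr_fun (fun σ hσ => (hEq σ hσ).symm) measurableSet_Ioi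
  have hnn : 0 ≤ᵐ[volume.restrict (Set.Ioi (0 : ℝ))]
      fun σ : ℝ => σ ^ (-(4 : ℝ)) * (1 + a / σ) ^ (-p) := by
    rw [EventuallyLE, ae_restrict_iff' measurableSet_Ioi]
    filter_upwards with σ hσ
    rw [hEq σ hσ]
    exact hpos σ hσ
  rw [← MeasureTheory.ofReal_integral_eq_lintegral_ofReal hInt hnn]
  congr 1
  rw [setIntegral_congr_fun measurableSet_Ioi hEq, key, hF0, sub_zero]
  field_simp
  ring

set_option maxHeartbeats 1000000 in
/-- For every `g > 0`,
`∫_0^∞ ∫_0^∞ σ^{-4} (1 + ξ g/σ)^{-3(1+1/ξ)} dσ dξ = (2/9) g^{-3} ln 2`. -/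
theorem gp_I3_integral (g : ℝ) (hg : 0 < g) :
    ∫⁻ ξ in Set.Ioi (0 : ℝ),
        ∫⁻ σ in Set.Ioi (0 : ℝ),
          ENNReal.ofReal (σ ^ (-(4 : ℝ)) * (1 + ξ * g / σ) ^ (-(3 * (1 + 1 / ξ))))
      = ENNReal.ofReal ((2 / 9) * g ^ (-(3 : ℝ)) * Real.log 2) := by
  have hg3 : (0 : ℝ) < g ^ 3 := by positivity
  have step : ∀ ξ ∈ Set.Ioi (0 : ℝ),
      (∫⁻ σ in Set.Ioi (0 : ℝ),
          ENNReal.ofReal (σ ^ (-(4 : ℝ)) * (1 + ξ * g / σ) ^ (-(3 * (1 + 1 / ξ)))))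
        = ENNReal.ofReal (2 / 3 * (g ^ 3)⁻¹ * ((ξ + 3) * (2 * ξ + 3))⁻¹) := by
    intro ξ hξ
    have hξ0 : (0 : ℝ) < ξ := hξ
    have hp : (3 : ℝ) < 3 * (1 + 1 / ξ) := by
      have : (0 : ℝ) < 1 / ξ := by positivity
      nlinarith
    rw [gp_inner_lintegral (ξ * g) (3 * (1 + 1 / ξ)) (by positivity) hp]
    congr 1
    have hx3 : (0 : ℝ) < ξ + 3 := by linarith
    have hx23 : (0 : ℝ) < 2 * ξ + 3 := by linarith
    have hden : (ξ * g) ^ 3 * ((3 * (1 + 1 / ξ) - 1) * (3 * (1 + 1 / ξ) - 2)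
        * (3 * (1 + 1 / ξ) - 3)) = 3 * g ^ 3 * ((ξ + 3) * (2 * ξ + 3)) := by
      field_simp
      ring
    rw [hden, div_eq_mul_inv, mul_inv, mul_inv]
    ring
  rw [setLIntegral_congr_fun measurableSet_Ioi step]
  set G : ℝ → ℝ := fun ξ => (Real.log (2 * ξ + 3) - Real.log (ξ + 3)) / 3 with hGdef
  have hGd : ∀ ξ ∈ Set.Ici (0 : ℝ), HasDerivAt G (((ξ + 3) * (2 * ξ + 3))⁻¹) ξ := by
    intro ξ hξ
    have hξ0 : (0 : ℝ) ≤ ξ := hξ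
    have hx3 : (0 : ℝ) < ξ + 3 := by linarith
    have hx23 : (0 : ℝ) < 2 * ξ + 3 := by linarith
    have d1 : HasDerivAt (fun ξ : ℝ => Real.log (2 * ξ + 3)) (2 * 1 / (2 * ξ + 3)) ξ :=
      (((hasDerivAt_id ξ).const_mul 2).add_const 3).log hx23.ne'
    have d2 : HasDerivAt (fun ξ : ℝ => Real.log (ξ + 3)) (1 / (ξ + 3)) ξ :=
      ((hasDerivAt_id ξ).add_const 3).log hx3.ne'
    have h := (d1.sub d2).div_const 3
    refine h.congr_deriv (Eq.symm ?_)
    field_simp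
    ring
  have hGpos : ∀ ξ ∈ Set.Ioi (0 : ℝ), 0 ≤ ((ξ + 3) * (2 * ξ + 3))⁻¹ := by
    intro ξ hξ
    have hξ0 : (0 : ℝ) < ξ := hξ
    positivity
  have hGtop : Tendsto G atTop (𝓝 (Real.log 2 / 3)) := by
    have hq : Tendsto (fun ξ : ℝ => (2 * ξ + 3) / (ξ + 3)) atTop (𝓝 2) := by
      have h0 : Tendsto (fun ξ : ℝ => 3 / (ξ + 3)) atTop (𝓝 0) :=
        Tendsto.div_atTop tendsto_const_nhds (tendsto_atTop_add_const_right _ 3 tendsto_id)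
      have h2 : Tendsto (fun ξ : ℝ => 2 - 3 / (ξ + 3)) atTop (𝓝 (2 - 0)) :=
        tendsto_const_nhds.sub h0
      rw [sub_zero] at h2
      refine Tendsto.congr' ?_ h2
      filter_upwards [eventually_gt_atTop (0 : ℝ)] with ξ hξ
      have hx3 : ξ + 3 ≠ 0 := by positivity
      field_simp
      ring
    have hlog : Tendsto (fun ξ : ℝ => Real.log ((2 * ξ + 3) / (ξ + 3))) atTop
        (𝓝 (Real.log 2)) := ((Real.continuousAt_log two_ne_zero).tendsto.comp hq)
    have hsub : Tendsto (fun ξ : ℝ => Real.log (2 * ξ + 3) - Real.log (ξ + 3)) atTop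
        (𝓝 (Real.log 2)) := by
      refine Tendsto.congr' ?_ hlog
      filter_upwards [eventually_gt_atTop (0 : ℝ)] with ξ hξ
      rw [Real.log_div (by positivity) (by positivity)]
    exact hsub.div_const 3
  have houter : ∫ ξ in Set.Ioi (0 : ℝ), ((ξ + 3) * (2 * ξ + 3))⁻¹
      = Real.log 2 / 3 - G 0 :=
    integral_Ioi_of_hasDerivAt_of_nonneg' hGd hGpos hGtop
  have hIntG : IntegrableOn (fun ξ : ℝ => ((ξ + 3) * (2 * ξ + 3))⁻¹) (Set.Ioi (0 : ℝ)) :=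
    integrableOn_Ioi_deriv_of_nonneg' hGd hGpos hGtop
  have hG0 : G 0 = 0 := by norm_num [hGdef]
  have hnn : 0 ≤ᵐ[volume.restrict (Set.Ioi (0 : ℝ))]
      fun ξ : ℝ => 2 / 3 * (g ^ 3)⁻¹ * ((ξ + 3) * (2 * ξ + 3))⁻¹ := by
    rw [EventuallyLE, ae_restrict_iff' measurableSet_Ioi]
    filter_upwards with ξ hξ
    have := hGpos ξ hξ
    positivity
  have hlast : ENNReal.ofReal
        (∫ ξ in Set.Ioi (0 : ℝ), 2 / 3 * (g ^ 3)⁻¹ * ((ξ + 3) * (2 * ξ + 3))⁻¹)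
      = ∫⁻ ξ in Set.Ioi (0 : ℝ),
          ENNReal.ofReal (2 / 3 * (g ^ 3)⁻¹ * ((ξ + 3) * (2 * ξ + 3))⁻¹) :=
    MeasureTheory.ofReal_integral_eq_lintegral_ofReal
      (hIntG.const_mul (2 / 3 * (g ^ 3)⁻¹)) hnn
  rw [← hlast]
  congr 1
  rw [integral_const_mul, houter, hG0, sub_zero]
  rw [Real.rpow_neg hg.le, show ((3 : ℝ)) = ((3 : ℕ) : ℝ) from by norm_num,
    Real.rpow_natCast]
  ring
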